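/- Let V be a d-dimensional linear subspace of ℝ^p that is not orthogonal to the first standard basis vector e₁. Then there exist indices i₁ < ⋯ < i_{p−d}, all different from 1, such that the (p−d)-dimensional subspace W spanned by {e_{i₁}, …, e_{i_{p−d}}} satisfies W ⊥ e₁ and W ∩ V = {0}. -/

import Mathlib

/-- Linear algebra lemma: if a `d`-dimensional subspace `V` of `ℝ^p` is not
orthogonal to the first standard basis vector, then there is a coordinate
subspace `W` of dimension `p - d`, spanned by standard basis vectors different
from the first one, which is orthogonal to the first basis vector and
intersects `V` trivially. -/
theorem stmt0 (p d : ℕ) (hp : 0 < p)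
    (V : Submodule ℝ (EuclideanSpace ℝ (Fin p)))
    (hV : Module.finrank ℝ V = d)
    (hnotperp : ∃ v ∈ V, inner ℝ v (EuclideanSpace.single (⟨0, hp⟩ : Fin p) (1 : ℝ)) ≠ (0 : ℝ)) :
    ∃ s : Finset (Fin p), s.card = p - d ∧ (⟨0, hp⟩ : Fin p) ∉ s ∧
      (∀ w ∈ Submodule.span ℝ ((fun i => EuclideanSpace.single i (1 : ℝ)) '' (s : Set (Fin p))),
        inner ℝ w (EuclideanSpace.single (⟨0, hp⟩ : Fin p) (1 : ℝ)) = (0 : ℝ)) ∧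
      Submodule.span ℝ ((fun i => EuclideanSpace.single i (1 : ℝ)) '' (s : Set (Fin p))) ⊓ V = ⊥ := by
  classical
  set z : Fin p := ⟨0, hp⟩
  set e : Fin p → EuclideanSpace ℝ (Fin p) := fun i => EuclideanSpace.single i (1:ℝ) with he
  have he_eq : e = (EuclideanSpace.basisFun (Fin p) ℝ : Fin p → _) :=
    funext fun i => (EuclideanSpace.basisFun_apply _ _ i).symm
  have he_inj : Function.Injective e := by
    rw [he_eq]; exact (EuclideanSpace.basisFun (Fin p) ℝ).toBasis.injective
  obtain ⟨v, hvV, hv0⟩ := hnotperp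
  have hv0' : v z ≠ 0 := by
    simpa [EuclideanSpace.inner_single_right] using hv0
  obtain ⟨sV, hsVsub, hsVspan, hsVli⟩ := exists_linearIndependent ℝ (V : Set (EuclideanSpace ℝ (Fin p)))
  rw [Submodule.span_eq] at hsVspan
  set E : Set (EuclideanSpace ℝ (Fin p)) := e '' {i | i ≠ z} with hE
  obtain ⟨b, hbt, hsb, htb, hli⟩ := exists_linearIndepOn_id_extension hsVli
    (Set.subset_union_left (t := E))
  -- span of sV ∪ E is ⊤
  have hspan_top : Submodule.span ℝ b = ⊤ := by
    rw [eq_top_iff]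
    have hE_le : ∀ i, i ≠ z → e i ∈ Submodule.span ℝ b :=
      fun i hi => htb (Set.mem_union_right _ ⟨i, hi, rfl⟩)
    have hsum : ∀ x : EuclideanSpace ℝ (Fin p), x = ∑ i, x i • e i := by
      intro x
      rw [he_eq]
      exact ((EuclideanSpace.basisFun (Fin p) ℝ).sum_repr x).symm
    have hv_mem : v ∈ Submodule.span ℝ b := Submodule.span_le.2
      (fun x hx => htb (Set.mem_union_left _ hx)) (hsVspan ▸ hvV : v ∈ Submodule.span ℝ sV)
    have hez : e z ∈ Submodule.span ℝ b := by
      have : v z • e z = v - ∑ i ∈ Finset.univ.filter (fun i => ¬ i = z), v i • e i := by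
        have hv_split : v = v z • e z + ∑ i ∈ Finset.univ.filter (fun i => ¬ i = z), v i • e i := by
          conv_lhs => rw [hsum v]
          rw [← Finset.sum_filter_add_sum_filter_not Finset.univ (fun i => i = z),
            Finset.filter_eq', if_pos (Finset.mem_univ z), Finset.sum_singleton]
        rw [eq_sub_iff_add_eq]
        exact hv_split.symm
      have hmem : v z • e z ∈ Submodule.span ℝ b := by
        rw [this]
        exact Submodule.sub_mem _ hv_mem (Submodule.sum_mem _ fun i hi =>
          Submodule.smul_mem _ _ (hE_le i (Finset.mem_filter.mp hi).2))
      have := Submodule.smul_mem _ (v z)⁻¹ hmem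
      rwa [smul_smul, inv_mul_cancel₀ hv0', one_smul] at this
    intro x _
    rw [hsum x]
    refine Submodule.sum_mem _ fun i _ => Submodule.smul_mem _ _ ?_
    by_cases hi : i = z
    · exact hi ▸ hez
    · exact hE_le i hi
  haveI : FiniteDimensional ℝ (EuclideanSpace ℝ (Fin p)) := by infer_instance
  have hb_fin : b.Finite := hli.setFinite
  have hsV_fin : sV.Finite := hsVli.setFinite
  haveI := hb_fin.fintype
  haveI := hsV_fin.fintype
  have hcard_b : b.ncard = p := by
    have h1 := finrank_span_set_eq_card hli
    rw [hspan_top] at h1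
    rw [Set.ncard_eq_toFinset_card' b, ← h1, finrank_top, finrank_euclideanSpace_fin]
  have hcard_sV : sV.ncard = d := by
    have h1 := finrank_span_set_eq_card hsVli
    rw [hsVspan] at h1
    rw [Set.ncard_eq_toFinset_card' sV, ← h1, hV]
  have hdiff_sub_E : b \ sV ⊆ E := fun x hx => (hbt hx.1).resolve_left hx.2
  set s : Finset (Fin p) := Finset.univ.filter (fun i => e i ∈ b \ sV) with hs
  have himg : e '' (s : Set (Fin p)) = b \ sV := by
    ext x
    constructor
    · rintro ⟨i, hi, rfl⟩
      simpa [hs] using hi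
    · intro hx
      obtain ⟨i, _, rfl⟩ := hdiff_sub_E hx
      exact ⟨i, by simpa [hs] using hx, rfl⟩
  have hcard_s : s.card = p - d := by
    have h1 : (e '' (s : Set (Fin p))).ncard = s.card := by
      rw [Set.ncard_image_of_injective _ he_inj, Set.ncard_coe_finset]
    rw [← h1, himg, Set.ncard_diff hsb hsV_fin, hcard_b, hcard_sV]
  have hz_not : z ∉ s := by
    intro hzs
    have : e z ∈ b \ sV := by simpa [hs] using hzs
    obtain ⟨i, hi, hie⟩ := hdiff_sub_E this
    exact hi (he_inj hie)
  have horth : ∀ w ∈ Submodule.span ℝ (e '' (s : Set (Fin p))),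
      inner ℝ w (EuclideanSpace.single z (1 : ℝ)) = (0 : ℝ) := by
    intro w hw
    induction hw using Submodule.span_induction with
    | mem x hx =>
      obtain ⟨i, hi, rfl⟩ := hx
      have hiz : i ≠ z := by
        intro h; subst h
        exact hz_not hi
      simp [e, EuclideanSpace.inner_single_left, EuclideanSpace.single_apply, Ne.symm hiz]
    | zero => simp
    | add x y _ _ hx hy => rw [inner_add_left, hx, hy, add_zero]
    | smul c x _ hx => rw [real_inner_smul_left, hx, mul_zero]
  have hdisj : Submodule.span ℝ (e '' (s : Set (Fin p))) ⊓ V = ⊥ := by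
    rw [himg, ← hsVspan]
    have hd : Disjoint (Subtype.val ⁻¹' (b \ sV) : Set b) (Subtype.val ⁻¹' sV) := by
      refine Set.disjoint_left.2 fun x hx1 hx2 => ?_
      exact hx1.2 hx2
    have := LinearIndependent.disjoint_span_image (v := ((↑) : b → EuclideanSpace ℝ (Fin p))) hli hd
    rw [Subtype.image_preimage_coe, Subtype.image_preimage_coe] at this
    rw [Set.inter_eq_right.2 (Set.diff_subset), Set.inter_eq_right.2 hsb] at this
    exact disjoint_iff.1 this
  exact ⟨s, hcard_s, hz_not, horth, hdisj⟩
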